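/- Let (Ω, μ) be a probability space, τ : Ω → Ω an ergodic measure-preserving transformation, and f : Ω → ℝ measurable. Suppose there exist a strictly increasing sequence (n_k) of positive integers, positive reals a_{n_k} → ∞, such that S_{n_k} f / a_{n_k} converges in distribution to the standard Gaussian N(0,1). Then for almost every ω, limsup_{n→∞} S_n f(ω) = +∞ and liminf_{n→∞} S_n f(ω) = -∞. -/

import Mathlib

open MeasureTheory Filter Real

private lemma aux_bdd (g : ℕ → ℝ) : ∀ (N : ℕ) (C : ℝ), (∀ n, N ≤ n → g n ≤ C) →
    ∃ M : ℕ, ∀ n, g n ≤ (M : ℝ) := by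
  intro N
  induction N with
  | zero =>
    intro C h
    obtain ⟨M, hM⟩ := exists_nat_ge C
    exact ⟨M, fun n => (h n (Nat.zero_le n)).trans hM⟩
  | succ N ih =>
    intro C h
    refine ih (max C (g N)) fun n hn => ?_
    rcases eq_or_lt_of_le hn with h1 | h1
    · rw [← h1]; exact le_max_right _ _
    · exact (h n h1).trans (le_max_left _ _)

private lemma gauss_int :
    Integrable (fun x : ℝ => (Real.sqrt (2 * π))⁻¹ * Real.exp (-x ^ 2 / 2)) := by
  have h1 : Integrable (fun x : ℝ => Real.exp (-(2⁻¹ : ℝ) * x ^ 2)) :=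
    integrable_exp_neg_mul_sq (by norm_num)
  have h2 := h1.const_mul (Real.sqrt (2 * π))⁻¹
  apply h2.congr
  filter_upwards with x
  have : -(2⁻¹ : ℝ) * x ^ 2 = -x ^ 2 / 2 := by ring
  rw [this]

private lemma gauss_total :
    ∫ x : ℝ, (Real.sqrt (2 * π))⁻¹ * Real.exp (-x ^ 2 / 2) = 1 := by
  have heq : ∀ x : ℝ, -x ^ 2 / 2 = -(2⁻¹ : ℝ) * x ^ 2 := fun x => by ring
  simp_rw [heq]
  rw [integral_const_mul, integral_gaussian, show π / 2⁻¹ = 2 * π by field_simp]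
  exact inv_mul_cancel₀ (ne_of_gt (Real.sqrt_pos.mpr (by positivity)))

private lemma gauss_pos (x : ℝ) : 0 < (Real.sqrt (2 * π))⁻¹ * Real.exp (-x ^ 2 / 2) :=
  mul_pos (inv_pos.mpr (Real.sqrt_pos.mpr (by positivity))) (Real.exp_pos _)

private lemma gauss_lt_one :
    ∫ x in Set.Iic (1:ℝ), (Real.sqrt (2 * π))⁻¹ * Real.exp (-x ^ 2 / 2) < 1 := by
  set g : ℝ → ℝ := fun x => (Real.sqrt (2 * π))⁻¹ * Real.exp (-x ^ 2 / 2) with hg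
  have hpos : 0 < ∫ x in Set.Ioi (1:ℝ), g x := by
    rw [setIntegral_pos_iff_support_of_nonneg_ae
      (Filter.Eventually.of_forall fun x => le_of_lt (gauss_pos x)) gauss_int.integrableOn]
    have h1 : Function.support g ∩ Set.Ioi 1 = Set.Ioi 1 :=
      Set.inter_eq_right.mpr fun x _ => ne_of_gt (gauss_pos x)
    rw [h1, Real.volume_Ioi]
    exact ENNReal.zero_lt_top
  have h2 := intervalIntegral.integral_Iic_add_Ioi (b := (1:ℝ)) gauss_int.integrableOn gauss_int.integrableOn
  rw [gauss_total] at h2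
  linarith

private lemma gauss_neg_pos :
    0 < ∫ x in Set.Iic (-1:ℝ), (Real.sqrt (2 * π))⁻¹ * Real.exp (-x ^ 2 / 2) := by
  set g : ℝ → ℝ := fun x => (Real.sqrt (2 * π))⁻¹ * Real.exp (-x ^ 2 / 2) with hg
  rw [setIntegral_pos_iff_support_of_nonneg_ae
    (Filter.Eventually.of_forall fun x => le_of_lt (gauss_pos x)) gauss_int.integrableOn]
  have h1 : Function.support g ∩ Set.Iic (-1) = Set.Iic (-1) :=
    Set.inter_eq_right.mpr fun x _ => ne_of_gt (gauss_pos x)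
  rw [h1, Real.volume_Iic]
  exact ENNReal.zero_lt_top

private lemma aux_main {Ω : Type*} [MeasurableSpace Ω] (μ : Measure Ω) [IsProbabilityMeasure μ]
    (τ : Ω → Ω) (hτ : Ergodic τ μ) (T : ℕ → Ω → ℝ) (hT : ∀ n, Measurable (T n))
    (hshift : ∀ n ω, T n (τ ω) = T (n + 1) ω - T 1 ω)
    (hcontra : ¬ ∀ᵐ ω ∂μ, ∃ M : ℕ, ∀ n, T n ω ≤ (M : ℝ)) :
    ∀ᵐ ω ∂μ, ∀ C : ℝ, ∃ᶠ n in atTop, C < T n ω := by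
  set E : Set Ω := {ω | ∀ m : ℕ, ∀ N : ℕ, ∃ n, N ≤ n ∧ (m : ℝ) < T n ω} with hE
  have hEmeas : MeasurableSet E := by
    have h1 : E = ⋂ m : ℕ, ⋂ N : ℕ, ⋃ n : ℕ, ⋃ _ : N ≤ n, {ω | (m : ℝ) < T n ω} := by
      ext ω
      simp [hE]
    rw [h1]
    exact .iInter fun m => .iInter fun N => .iUnion fun n => .iUnion fun _ =>
      measurableSet_lt measurable_const (hT n)
  have hEinv : τ ⁻¹' E = E := by
    ext ω
    simp only [Set.mem_preimage, hE, Set.mem_setOf_eq]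
    constructor
    · intro h m N
      obtain ⟨m', hm'⟩ := exists_nat_ge ((m : ℝ) - T 1 ω)
      obtain ⟨n, hn, hlt⟩ := h m' N
      rw [hshift n ω] at hlt
      exact ⟨n + 1, le_trans hn (Nat.le_succ n), by linarith⟩
    · intro h m N
      obtain ⟨m', hm'⟩ := exists_nat_ge ((m : ℝ) + T 1 ω)
      obtain ⟨n, hn, hlt⟩ := h m' (N + 1)
      obtain ⟨n', rfl⟩ : ∃ n', n = n' + 1 := ⟨n - 1, by omega⟩
      refine ⟨n', by omega, ?_⟩
      rw [hshift n' ω]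
      linarith
  rcases hτ.ae_empty_or_univ hEmeas hEinv with h0 | h1
  · exfalso
    apply hcontra
    have h0' : μ E = 0 := ae_eq_empty.mp h0
    have hae : ∀ᵐ ω ∂μ, ω ∉ E := by
      rw [ae_iff]
      simpa using h0'
    filter_upwards [hae] with ω hω
    simp only [hE, Set.mem_setOf_eq, not_forall, not_exists, not_and, not_lt] at hω
    obtain ⟨m, N, hN⟩ := hω
    exact aux_bdd (fun n => T n ω) N m hN
  · have hae : ∀ᵐ ω ∂μ, ω ∈ E := Filter.eventuallyEq_univ.mp h1
    filter_upwards [hae] with ω hω C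
    rw [Filter.frequently_atTop]
    intro N
    obtain ⟨m, hm⟩ := exists_nat_gt C
    obtain ⟨n, hn, hlt⟩ := hω m N
    exact ⟨n, hn, hm.trans hlt⟩

/-- If a subsequence of the normalized Birkhoff sums of `f` (for an ergodic
measure-preserving `τ`) converges in distribution to the standard Gaussian, then
almost surely `limsup S_n f = +∞` and `liminf S_n f = -∞`. -/
theorem stmt2 {Ω : Type*} [MeasurableSpace Ω] (μ : Measure Ω) [IsProbabilityMeasure μ]
    (τ : Ω → Ω) (f : Ω → ℝ) (hτ : Ergodic τ μ) (hf : Measurable f)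
    (nk : ℕ → ℕ) (hmono : StrictMono nk) (hpos : ∀ k, 1 ≤ nk k)
    (a : ℕ → ℝ) (ha : ∀ k, 0 < a k) (hatop : Tendsto a atTop atTop)
    (hclt : ∀ t : ℝ,
      Tendsto (fun k =>
          (μ {ω | (∑ i ∈ Finset.range (nk k), f (τ^[i] ω)) / a k ≤ t}).toReal)
        atTop
        (nhds (∫ x in Set.Iic t, (Real.sqrt (2 * π))⁻¹ * Real.exp (-x ^ 2 / 2)))) :
    ∀ᵐ ω ∂μ,
      (∀ C : ℝ, ∃ᶠ n in atTop, C < ∑ i ∈ Finset.range n, f (τ^[i] ω)) ∧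
      (∀ C : ℝ, ∃ᶠ n in atTop, (∑ i ∈ Finset.range n, f (τ^[i] ω)) < C) := by
  set S : ℕ → Ω → ℝ := fun n ω => ∑ i ∈ Finset.range n, f (τ^[i] ω) with hSdef
  have hS_meas : ∀ n, Measurable (S n) := fun n =>
    Finset.measurable_sum _ fun i _ => hf.comp (hτ.measurable.iterate i)
  have hshift : ∀ n ω, S n (τ ω) = S (n + 1) ω - S 1 ω := by
    intro n ω
    rw [hSdef]
    simp only
    rw [Finset.sum_range_succ' (fun i => f (τ^[i] ω)) n]
    simp [Function.iterate_succ_apply]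
  -- Part 1: not a.e. bounded above
  have hcontra1 : ¬ ∀ᵐ ω ∂μ, ∃ M : ℕ, ∀ n, S n ω ≤ (M : ℝ) := by
    intro hae
    set B : ℕ → Set Ω := fun M => {ω | ∀ n, S n ω ≤ (M : ℝ)} with hB
    have hBmeas : ∀ M, MeasurableSet (B M) := by
      intro M
      have : B M = ⋂ n, {ω | S n ω ≤ (M : ℝ)} := by ext ω; simp [hB]
      rw [this]
      exact .iInter fun n => measurableSet_le (hS_meas n) measurable_const
    have hBmono : Monotone B := fun M M' h ω hω n =>
      (hω n).trans (by exact_mod_cast h)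
    have hUnion : μ (⋃ M, B M) = 1 := by
      rw [← prob_compl_eq_zero_iff (MeasurableSet.iUnion hBmeas)]
      refine measure_mono_null ?_ (ae_iff.mp hae)
      intro ω hω
      simpa [hB] using hω
    have htend : Tendsto (fun M => (μ (B M)).toReal) atTop (nhds 1) := by
      have h1 := tendsto_measure_iUnion_atTop (μ := μ) hBmono
      rw [hUnion] at h1
      simpa [Function.comp_def] using (ENNReal.tendsto_toReal ENNReal.one_ne_top).comp h1
    set G1 := ∫ x in Set.Iic (1:ℝ), (Real.sqrt (2 * π))⁻¹ * Real.exp (-x ^ 2 / 2) with hG1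
    have hG1lt : G1 < 1 := gauss_lt_one
    set δ := (1 - G1) / 2 with hδdef
    have hδ : 0 < δ := by rw [hδdef]; linarith
    obtain ⟨M, hM⟩ := (htend.eventually (eventually_gt_nhds
      (show 1 - δ < 1 by linarith))).exists
    have hev1 : ∀ᶠ k in atTop, (M : ℝ) + 1 ≤ a k := hatop.eventually_ge_atTop _
    have hev2 : ∀ᶠ k in atTop,
        (μ {ω | (∑ i ∈ Finset.range (nk k), f (τ^[i] ω)) / a k ≤ 1}).toReal < G1 + δ :=
      (hclt 1).eventually (eventually_lt_nhds (by linarith))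
    obtain ⟨k, hk1, hk2⟩ := (hev1.and hev2).exists
    have hsub : B M ⊆ {ω | (∑ i ∈ Finset.range (nk k), f (τ^[i] ω)) / a k ≤ 1} := by
      intro ω hω
      have h1 := hω (nk k)
      rw [Set.mem_setOf_eq, div_le_one (ha k)]
      rw [hSdef] at h1
      simp only at h1
      linarith
    have hmono' : (μ (B M)).toReal ≤
        (μ {ω | (∑ i ∈ Finset.range (nk k), f (τ^[i] ω)) / a k ≤ 1}).toReal :=
      ENNReal.toReal_mono (measure_ne_top μ _) (measure_mono hsub)
    have : G1 + δ = 1 - δ := by rw [hδdef]; ring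
    linarith
  -- Part 2: not a.e. bounded below
  have hcontra2 : ¬ ∀ᵐ ω ∂μ, ∃ M : ℕ, ∀ n, -(S n ω) ≤ (M : ℝ) := by
    intro hae
    set B : ℕ → Set Ω := fun M => {ω | ∀ n, -(S n ω) ≤ (M : ℝ)} with hB
    have hBmeas : ∀ M, MeasurableSet (B M) := by
      intro M
      have : B M = ⋂ n, {ω | -(S n ω) ≤ (M : ℝ)} := by ext ω; simp [hB]
      rw [this]
      exact .iInter fun n => measurableSet_le (hS_meas n).neg measurable_const
    have hBmono : Monotone B := fun M M' h ω hω n =>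
      (hω n).trans (by exact_mod_cast h)
    have hUnion : μ (⋃ M, B M) = 1 := by
      rw [← prob_compl_eq_zero_iff (MeasurableSet.iUnion hBmeas)]
      refine measure_mono_null ?_ (ae_iff.mp hae)
      intro ω hω
      simpa [hB] using hω
    have htend : Tendsto (fun M => (μ (B M)).toReal) atTop (nhds 1) := by
      have h1 := tendsto_measure_iUnion_atTop (μ := μ) hBmono
      rw [hUnion] at h1
      simpa [Function.comp_def] using (ENNReal.tendsto_toReal ENNReal.one_ne_top).comp h1
    set G2 := ∫ x in Set.Iic (-1:ℝ), (Real.sqrt (2 * π))⁻¹ * Real.exp (-x ^ 2 / 2) with hG2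
    have hG2pos : 0 < G2 := gauss_neg_pos
    set δ := G2 / 2 with hδdef
    have hδ : 0 < δ := by rw [hδdef]; linarith
    obtain ⟨M, hM⟩ := (htend.eventually (eventually_gt_nhds
      (show 1 - δ < 1 by linarith))).exists
    have hev1 : ∀ᶠ k in atTop, (M : ℝ) + 1 ≤ a k := hatop.eventually_ge_atTop _
    have hev2 : ∀ᶠ k in atTop,
        δ < (μ {ω | (∑ i ∈ Finset.range (nk k), f (τ^[i] ω)) / a k ≤ -1}).toReal :=
      (hclt (-1)).eventually (eventually_gt_nhds (by rw [hδdef]; linarith))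
    obtain ⟨k, hk1, hk2⟩ := (hev1.and hev2).exists
    have hsub : {ω | (∑ i ∈ Finset.range (nk k), f (τ^[i] ω)) / a k ≤ -1} ⊆ (B M)ᶜ := by
      intro ω hω hωB
      rw [Set.mem_setOf_eq, div_le_iff₀ (ha k)] at hω
      have h1 := hωB (nk k)
      rw [hSdef] at h1
      simp only at h1
      linarith
    have hcompl : (μ ((B M)ᶜ)).toReal = 1 - (μ (B M)).toReal := by
      rw [prob_compl_eq_one_sub (hBmeas M),
        ENNReal.toReal_sub_of_le prob_le_one ENNReal.one_ne_top, ENNReal.toReal_one]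
    have hmono' : (μ {ω | (∑ i ∈ Finset.range (nk k), f (τ^[i] ω)) / a k ≤ -1}).toReal ≤
        (μ ((B M)ᶜ)).toReal :=
      ENNReal.toReal_mono (measure_ne_top μ _) (measure_mono hsub)
    rw [hcompl] at hmono'
    linarith
  have main1 := aux_main μ τ hτ S hS_meas hshift hcontra1
  have main2 := aux_main μ τ hτ (fun n ω => -(S n ω)) (fun n => (hS_meas n).neg)
    (fun n ω => by rw [hshift n ω]; ring) hcontra2
  filter_upwards [main1, main2] with ω h1 h2
  refine ⟨fun C => h1 C, fun C => ?_⟩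
  exact (h2 (-C)).mono fun n hn => by simpa using by linarith
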